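/- arXiv:2307.12702 — 5 statements merged into one kernel-verified Lean document; each statement's English description precedes it below -/
import Mathlib

section
/- A real 2n×2n antisymmetric matrix β anticommutes with Ω = Iₙ ⊗ J (where J = [[0,1],[-1,0]]) if and only if β can be written as β = X ⊗ σ_x + Z ⊗ σ_z for some real antisymmetric n×n matrices X and Z, where σ_x = [[0,1],[1,0]] and σ_z = [[1,0],[0,-1]]. -/
open Matrix Kronecker

/-- A real antisymmetric β anticommutes with Ω = Iₙ ⊗ J iff
    β = X ⊗ σₓ + Z ⊗ σ_z for some real antisymmetric X, Z. -/
theorem stmt3 (n : ℕ) (J σx σz : Matrix (Fin 2) (Fin 2) ℝ)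
    (hJ : J = !![0, 1; -1, 0]) (hσx : σx = !![0, 1; 1, 0]) (hσz : σz = !![1, 0; 0, -1])
    (Ω β : Matrix (Fin n × Fin 2) (Fin n × Fin 2) ℝ)
    (hΩ : Ω = (1 : Matrix (Fin n) (Fin n) ℝ) ⊗ₖ J)
    (hanti : βᵀ = -β) :
    β * Ω + Ω * β = 0 ↔
      ∃ X Z : Matrix (Fin n) (Fin n) ℝ,
        Xᵀ = -X ∧ Zᵀ = -Z ∧ β = X ⊗ₖ σx + Z ⊗ₖ σz := by
  subst hJ hσx hσz hΩ
  have hβ := fun p q => Matrix.ext_iff.mpr hanti p q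
  simp only [Matrix.transpose_apply, Matrix.neg_apply] at hβ
  constructor
  · intro h
    have h' := fun p q => Matrix.ext_iff.mpr h p q
    simp only [Matrix.add_apply, Matrix.mul_apply, Fintype.sum_prod_type, Matrix.one_apply,
      Fin.sum_univ_two, Matrix.kroneckerMap_apply, Matrix.zero_apply] at h'
    have E1 : ∀ i j : Fin n, β (i,1) (j,0) = β (i,0) (j,1) := by
      intro i j
      have := h' (i,0) (j,0)
      simp at this
      linarith
    have E2 : ∀ i j : Fin n, β (i,1) (j,1) = -β (i,0) (j,0) := by
      intro i j
      have := h' (i,0) (j,1)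
      simp at this
      linarith
    refine ⟨Matrix.of fun i j => β (i,0) (j,1), Matrix.of fun i j => β (i,0) (j,0), ?_, ?_, ?_⟩
    · ext i j
      simp only [Matrix.transpose_apply, Matrix.neg_apply, Matrix.of_apply]
      rw [← E1 i j, hβ (i,1) (j,0)]
    · ext i j
      simp only [Matrix.transpose_apply, Matrix.neg_apply, Matrix.of_apply]
      exact hβ (i,0) (j,0)
    · ext ⟨i,a⟩ ⟨j,b⟩
      fin_cases a <;> fin_cases b <;>
        simp [Matrix.kroneckerMap_apply, E1, E2]
  · rintro ⟨X, Z, hX, hZ, rfl⟩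
    rw [add_mul, mul_add, ← Matrix.mul_kronecker_mul, ← Matrix.mul_kronecker_mul,
      ← Matrix.mul_kronecker_mul, ← Matrix.mul_kronecker_mul, one_mul, mul_one, mul_one, one_mul]
    have e1 : (!![0, 1; 1, 0] * !![0, 1; -1, 0] : Matrix (Fin 2) (Fin 2) ℝ)
        = - (!![0, 1; -1, 0] * !![0, 1; 1, 0]) := by
      norm_num [Matrix.mul_fin_two]
    have e2 : (!![1, 0; 0, -1] * !![0, 1; -1, 0] : Matrix (Fin 2) (Fin 2) ℝ)
        = - (!![0, 1; -1, 0] * !![1, 0; 0, -1]) := by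
      norm_num [Matrix.mul_fin_two]
    have negk : ∀ (A : Matrix (Fin n) (Fin n) ℝ) (B : Matrix (Fin 2) (Fin 2) ℝ),
        A ⊗ₖ (-B) = -(A ⊗ₖ B) := by
      intro A B
      ext ⟨i,a⟩ ⟨j,b⟩
      simp [Matrix.kroneckerMap_apply]
    rw [e1, e2, negk, negk]
    abel
end

section
/- Let Z and X be real antisymmetric n×n matrices and let U be a complex unitary n×n matrix such that U(Z+iX)Uᵀ = Λ ⊗ J where Λ is a real diagonal (n/2)×(n/2) matrix and J = [[0,1],[-1,0]] (Hua–Youla block form). Write U* = c + is with c, s real, and set R = c ⊗ I₂ + s ⊗ J. Then R(X ⊗ σ_x + Z ⊗ σ_z)Rᵀ = (Λ ⊗ J) ⊗ σ_z. -/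
open Matrix Kronecker Complex

private lemma neg_kron {l l' n p : Type*} (A : Matrix l l' ℝ) (B : Matrix n p ℝ) :
    (-A) ⊗ₖ B = -(A ⊗ₖ B) := by ext; simp

private lemma kron_neg {l l' n p : Type*} (A : Matrix l l' ℝ) (B : Matrix n p ℝ) :
    A ⊗ₖ (-B) = -(A ⊗ₖ B) := by ext; simp

private lemma mmul' {n' : Type*} [Fintype n'] (M N : Matrix n' n' ℝ) :
    (M * N).map (Complex.ofReal) = M.map Complex.ofReal * N.map Complex.ofReal := by
  ext i j; simp [Matrix.mul_apply]

private lemma madd' {n' : Type*} (M N : Matrix n' n' ℝ) :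
    (M + N).map (Complex.ofReal) = M.map Complex.ofReal + N.map Complex.ofReal := by
  ext i j; simp

private lemma msub' {n' : Type*} (M N : Matrix n' n' ℝ) :
    (M - N).map (Complex.ofReal) = M.map Complex.ofReal - N.map Complex.ofReal := by
  ext i j; simp

private lemma cplx_abstract {n' : Type*} [Fintype n'] (c s Z X : Matrix n' n' ℂ) :
    (c - Complex.I • s) * (Z + Complex.I • X) * (c - Complex.I • s)ᵀ =
      (c*Z*cᵀ + s*X*cᵀ + c*X*sᵀ - s*Z*sᵀ) +
        Complex.I • (c*X*cᵀ - s*Z*cᵀ - c*Z*sᵀ - s*X*sᵀ) := by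
  simp only [transpose_sub, transpose_smul, Matrix.sub_mul, Matrix.mul_sub, Matrix.add_mul,
    Matrix.mul_add, Matrix.smul_mul, Matrix.mul_smul, smul_smul, Complex.I_mul_I, neg_smul,
    one_smul, smul_sub, smul_add]
  simp only [neg_smul, one_smul, neg_neg, Matrix.neg_mul, Matrix.mul_neg, smul_neg]
  abel

private lemma cplx_expand {n' : Type*} [Fintype n'] (c s Z X : Matrix n' n' ℝ) :
    (c.map Complex.ofReal - Complex.I • s.map Complex.ofReal) *
        (Z.map Complex.ofReal + Complex.I • X.map Complex.ofReal) *
        (c.map Complex.ofReal - Complex.I • s.map Complex.ofReal)ᵀ =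
      (c*Z*cᵀ + s*X*cᵀ + c*X*sᵀ - s*Z*sᵀ).map Complex.ofReal +
        Complex.I • (c*X*cᵀ - s*Z*cᵀ - c*Z*sᵀ - s*X*sᵀ).map Complex.ofReal := by
  rw [cplx_abstract]
  simp only [madd', msub', mmul', Matrix.transpose_map]

private lemma kron_real {n' : Type*} [Fintype n'] (c s Z X : Matrix n' n' ℝ) :
    (c ⊗ₖ (1 : Matrix (Fin 2) (Fin 2) ℝ) + s ⊗ₖ !![0, 1; -1, 0]) *
        (X ⊗ₖ !![0, 1; 1, 0] + Z ⊗ₖ !![1, 0; 0, -1]) *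
        (c ⊗ₖ (1 : Matrix (Fin 2) (Fin 2) ℝ) + s ⊗ₖ !![0, 1; -1, 0])ᵀ =
      (c*Z*cᵀ + s*X*cᵀ + c*X*sᵀ - s*Z*sᵀ) ⊗ₖ !![1, 0; 0, -1] +
        (c*X*cᵀ - s*Z*cᵀ - c*Z*sᵀ - s*X*sᵀ) ⊗ₖ !![0, 1; 1, 0] := by
  have hJT : (!![0, 1; -1, 0] : Matrix (Fin 2) (Fin 2) ℝ)ᵀ = !![0, -1; 1, 0] := by
    ext i j; fin_cases i <;> fin_cases j <;> simp
  simp only [transpose_add, ← kroneckerMap_transpose, transpose_one, hJT,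
    Matrix.add_mul, Matrix.mul_add, ← mul_kronecker_mul, Matrix.one_mul, Matrix.mul_one]
  norm_num [mul_fin_two]
  have h1 : (!![(0:ℝ), -1; -1, 0] : Matrix (Fin 2) (Fin 2) ℝ) = -!![0, 1; 1, 0] := by
    ext i j; fin_cases i <;> fin_cases j <;> simp
  have h2 : (!![(-1:ℝ), 0; 0, 1] : Matrix (Fin 2) (Fin 2) ℝ) = -!![1, 0; 0, -1] := by
    ext i j; fin_cases i <;> fin_cases j <;> simp
  rw [h1, h2]
  simp only [sub_eq_add_neg, add_kronecker, ← neg_kron, kron_neg, neg_kron, neg_neg]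
  abel

/-- With n = 2m, if U(Z+iX)Uᵀ = Λ ⊗ J is the Hua–Youla block form,
    U* = c + is, and R = c ⊗ I₂ + s ⊗ J, then R(X ⊗ σₓ + Z ⊗ σ_z)Rᵀ = (Λ ⊗ J) ⊗ σ_z. -/
theorem stmt6 (m : ℕ) (J σx σz : Matrix (Fin 2) (Fin 2) ℝ)
    (hJ : J = !![0, 1; -1, 0]) (hσx : σx = !![0, 1; 1, 0]) (hσz : σz = !![1, 0; 0, -1])
    (Z X : Matrix (Fin m × Fin 2) (Fin m × Fin 2) ℝ)
    (hZ : Zᵀ = -Z) (hX : Xᵀ = -X)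
    (U : Matrix (Fin m × Fin 2) (Fin m × Fin 2) ℂ) (hU : Uᴴ * U = 1)
    (Λ : Matrix (Fin m) (Fin m) ℝ) (hΛ : Λ.IsDiag)
    (hblock : U * (Z.map Complex.ofReal + Complex.I • X.map Complex.ofReal) * Uᵀ =
      (Λ ⊗ₖ J).map Complex.ofReal)
    (c s : Matrix (Fin m × Fin 2) (Fin m × Fin 2) ℝ)
    (hcs : U.map (starRingEnd ℂ) = c.map Complex.ofReal + Complex.I • s.map Complex.ofReal)
    (R : Matrix ((Fin m × Fin 2) × Fin 2) ((Fin m × Fin 2) × Fin 2) ℝ)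
    (hR : R = c ⊗ₖ (1 : Matrix (Fin 2) (Fin 2) ℝ) + s ⊗ₖ J) :
    R * (X ⊗ₖ σx + Z ⊗ₖ σz) * Rᵀ = (Λ ⊗ₖ J) ⊗ₖ σz := by
  subst hJ hσx hσz hR
  -- Step 1: U = c - i s
  have hU2 : U = c.map Complex.ofReal - Complex.I • s.map Complex.ofReal := by
    ext i j
    have h := congrFun (congrFun hcs i) j
    simp only [Matrix.map_apply, Matrix.add_apply, Matrix.smul_apply, smul_eq_mul] at h
    have h2 := congrArg (starRingEnd ℂ) h
    simp only [RingHom.id_apply, RingHomCompTriple.comp_apply, _root_.map_add, _root_.map_mul,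
      Complex.conj_conj, Complex.conj_ofReal, Complex.conj_I] at h2
    simp only [Matrix.sub_apply, Matrix.map_apply, Matrix.smul_apply, smul_eq_mul]
    rw [h2]; ring
  -- Step 2: extract real/imaginary parts from hblock
  rw [hU2, cplx_expand] at hblock
  have hA : c*Z*cᵀ + s*X*cᵀ + c*X*sᵀ - s*Z*sᵀ = Λ ⊗ₖ !![0, 1; -1, 0] := by
    ext i j
    have h := congrFun (congrFun hblock i) j
    simp only [Matrix.add_apply, Matrix.smul_apply, Matrix.map_apply, smul_eq_mul] at h
    have := congrArg Complex.re h
    simpa using this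
  have hB : c*X*cᵀ - s*Z*cᵀ - c*Z*sᵀ - s*X*sᵀ = 0 := by
    ext i j
    have h := congrFun (congrFun hblock i) j
    simp only [Matrix.add_apply, Matrix.smul_apply, Matrix.map_apply, smul_eq_mul] at h
    have := congrArg Complex.im h
    simpa using this
  rw [kron_real, hA, hB, zero_kronecker, add_zero]
end

section
/- Define ξ(ψ) as the infimum of ‖a‖₁² over all finite decompositions |ψ⟩ = Σⱼ aⱼ |sⱼ⟩ into normalized states |sⱼ⟩ from a fixed set S of unit vectors whose span contains |ψ⟩. If |ω⟩ is any unit vector with ⟨ω|ψ⟩ ≠ 0 and F(ω) := sup over s ∈ S of |⟨ω|s⟩|², then ξ(ψ) ≥ |⟨ω|ψ⟩|² / F(ω) is NOT generally valid as an equality, but the lower bound ξ(ψ) ≥ |⟨ω|ψ⟩|² / F(ω) always holds. -/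
open scoped InnerProductSpace

/-- the extent lower bound ξ(ψ) ≥ |⟨ω|ψ⟩|² / F(ω) always holds. -/
theorem stmt10 {H : Type*} [NormedAddCommGroup H] [InnerProductSpace ℂ H]
    [FiniteDimensional ℂ H]
    (S : Set H) (hS : ∀ s ∈ S, ‖s‖ = 1)
    (ψ ω : H) (hω : ‖ω‖ = 1)
    (ξset : Set ℝ)
    (hξ : ξset = {r | ∃ (k : ℕ) (a : Fin k → ℂ) (s : Fin k → H),
      (∀ j, s j ∈ S) ∧ ψ = ∑ j, a j • s j ∧ r = (∑ j, ‖a j‖) ^ 2})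
    (hspan : ξset.Nonempty)
    (F : ℝ) (hF : F = sSup {r | ∃ s ∈ S, r = ‖(⟪ω, s⟫_ℂ : ℂ)‖ ^ 2})
    (hover : ⟪ω, ψ⟫_ℂ ≠ 0) :
    ‖(⟪ω, ψ⟫_ℂ : ℂ)‖ ^ 2 / F ≤ sInf ξset := by
  subst hξ hF
  set T := {r | ∃ s ∈ S, r = ‖(⟪ω, s⟫_ℂ : ℂ)‖ ^ 2} with hT
  have hTbdd : BddAbove T := by
    refine ⟨1, ?_⟩
    rintro r ⟨s, hs, rfl⟩
    have h1 := norm_inner_le_norm (𝕜 := ℂ) ω s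
    rw [hω, hS s hs] at h1
    nlinarith [norm_nonneg (⟪ω, s⟫_ℂ)]
  apply le_csInf hspan
  rintro r ⟨k, a, s, hsS, hψ, rfl⟩
  have key : ∀ j, ‖⟪ω, s j⟫_ℂ‖ ^ 2 ≤ sSup T := fun j =>
    le_csSup hTbdd ⟨s j, hsS j, rfl⟩
  have hsum : ⟪ω, ψ⟫_ℂ = ∑ j, a j * ⟪ω, s j⟫_ℂ := by
    rw [hψ, inner_sum]; simp [inner_smul_right]
  have hFpos : 0 < sSup T := by
    have hex : ∃ j, ⟪ω, s j⟫_ℂ ≠ 0 := by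
      by_contra h
      push_neg at h
      apply hover
      rw [hsum]
      simp [h]
    obtain ⟨j, hj⟩ := hex
    have h0 : 0 < ‖⟪ω, s j⟫_ℂ‖ ^ 2 := pow_pos (norm_pos_iff.mpr hj) 2
    linarith [key j]
  rw [div_le_iff₀ hFpos]
  have hbound : ‖⟪ω, ψ⟫_ℂ‖ ≤ (∑ j, ‖a j‖) * Real.sqrt (sSup T) := by
    rw [hψ, inner_sum]
    calc ‖∑ j, ⟪ω, a j • s j⟫_ℂ‖ ≤ ∑ j, ‖⟪ω, a j • s j⟫_ℂ‖ := norm_sum_le _ _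
      _ ≤ ∑ j, ‖a j‖ * Real.sqrt (sSup T) := by
          apply Finset.sum_le_sum
          intro j _
          rw [inner_smul_right, norm_mul]
          gcongr
          rw [← Real.sqrt_sq (norm_nonneg _)]
          exact Real.sqrt_le_sqrt (key j)
      _ = (∑ j, ‖a j‖) * Real.sqrt (sSup T) := by rw [← Finset.sum_mul]
  have h2 := mul_self_le_mul_self (norm_nonneg _) hbound
  nlinarith [Real.sq_sqrt hFpos.le, Real.sqrt_nonneg (sSup T),
    Finset.sum_nonneg (fun j _ => norm_nonneg (a j)) (s := Finset.univ (α := Fin k))]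
end

section
/- Let S be a set of unit vectors in a finite-dimensional complex Hilbert space and ψ a unit vector such that the rank-one projector |ψ⟩⟨ψ| equals (1/N) Σᵢ Vᵢ where each Vᵢ is a unitary with Vᵢ S ⊆ S (the unitaries preserve S). Define ξ(ψ) = inf ‖a‖₁² over decompositions ψ = Σⱼ aⱼ sⱼ with sⱼ ∈ S, and F(ψ) = sup_{s ∈ S} |⟨ψ|s⟩|². If F(ψ) > 0, then ξ(ψ) = 1/F(ψ). -/
open scoped InnerProductSpace
open Finset

/-- if |ψ⟩⟨ψ| = (1/N) Σᵢ Vᵢ with each Vᵢ a unitary preserving the set S of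
    free states, then ξ(ψ) = 1/F(ψ) whenever F(ψ) > 0. -/
theorem stmt11 {H : Type*} [NormedAddCommGroup H] [InnerProductSpace ℂ H]
    [FiniteDimensional ℂ H]
    (S : Set H) (hS : ∀ s ∈ S, ‖s‖ = 1)
    (ψ : H) (hψ : ‖ψ‖ = 1)
    (N : ℕ) (hN : 0 < N) (V : Fin N → (H ≃ₗᵢ[ℂ] H))
    (hVS : ∀ i, ∀ s ∈ S, V i s ∈ S)
    (hproj : ∀ φ : H, (⟪ψ, φ⟫_ℂ) • ψ = (N : ℂ)⁻¹ • ∑ i : Fin N, V i φ)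
    (ξset : Set ℝ)
    (hξ : ξset = {r | ∃ (k : ℕ) (a : Fin k → ℂ) (s : Fin k → H),
      (∀ j, s j ∈ S) ∧ ψ = ∑ j, a j • s j ∧ r = (∑ j, ‖a j‖) ^ 2})
    (F : ℝ) (hF : F = sSup {r | ∃ s ∈ S, r = ‖(⟪ψ, s⟫_ℂ : ℂ)‖ ^ 2})
    (hFpos : 0 < F) :
    sInf ξset = 1 / F := by
  set Fset : Set ℝ := {r | ∃ s ∈ S, r = ‖(⟪ψ, s⟫_ℂ : ℂ)‖ ^ 2} with hFset
  -- Fset is nonempty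
  have hFne : Fset.Nonempty := by
    by_contra h
    rw [Set.not_nonempty_iff_eq_empty] at h
    rw [hF, h, Real.sSup_empty] at hFpos
    exact lt_irrefl 0 hFpos
  -- Fset is bounded above by 1
  have hFbdd : BddAbove Fset := by
    refine ⟨1, ?_⟩
    rintro r ⟨s, hs, rfl⟩
    have h1 : ‖(⟪ψ, s⟫_ℂ : ℂ)‖ ≤ 1 := by
      have := norm_inner_le_norm (𝕜 := ℂ) ψ s
      rwa [hψ, hS s hs, one_mul] at this
    calc ‖(⟪ψ, s⟫_ℂ : ℂ)‖ ^ 2 ≤ 1 ^ 2 := by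
          exact pow_le_pow_left₀ (norm_nonneg _) h1 2
      _ = 1 := one_pow 2
  -- each element is ≤ F
  have hFub : ∀ s ∈ S, ‖(⟪ψ, s⟫_ℂ : ℂ)‖ ^ 2 ≤ F := by
    intro s hs
    rw [hF]
    exact le_csSup hFbdd ⟨s, hs, rfl⟩
  -- key construction: for ω ∈ S with nonzero overlap, 1/‖⟪ψ,ω⟫‖² ∈ ξset
  have key : ∀ ω ∈ S, (⟪ψ, ω⟫_ℂ : ℂ) ≠ 0 → 1 / ‖(⟪ψ, ω⟫_ℂ : ℂ)‖ ^ 2 ∈ ξset := by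
    intro ω hω hc
    set c : ℂ := ⟪ψ, ω⟫_ℂ with hc'
    have hNc : ((N : ℂ)) ≠ 0 := Nat.cast_ne_zero.mpr hN.ne'
    have hNcc : ((N : ℂ) * c) ≠ 0 := mul_ne_zero hNc hc
    rw [hξ]
    refine ⟨N, fun _ => ((N : ℂ) * c)⁻¹, fun i => V i ω, fun i => hVS i ω hω, ?_, ?_⟩
    · rw [← Finset.smul_sum]
      have h := hproj ω
      have hsum : (∑ i : Fin N, (V i) ω) = ((N : ℂ) * c) • ψ := by
        rw [mul_smul]
        rw [h, smul_smul, mul_inv_cancel₀ hNc, one_smul]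
      rw [hsum, smul_smul, inv_mul_cancel₀ hNcc, one_smul]
    · have hnorm : ‖((N : ℂ) * c)⁻¹‖ = ((N : ℝ) * ‖c‖)⁻¹ := by
        rw [norm_inv, norm_mul]
        norm_num
      rw [Finset.sum_const, Finset.card_univ, Fintype.card_fin, hnorm,
        nsmul_eq_mul]
      have hcn : ‖c‖ ≠ 0 := norm_ne_zero_iff.mpr hc
      have hNn : (N : ℝ) ≠ 0 := Nat.cast_ne_zero.mpr hN.ne'
      rw [mul_inv, ← mul_assoc, mul_inv_cancel₀ hNn, one_mul, one_div, inv_pow]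
  -- ξset is nonempty
  have hξne : ξset.Nonempty := by
    obtain ⟨r, ⟨ω, hω, rfl⟩, hr⟩ := exists_lt_of_lt_csSup hFne (hF ▸ hFpos)
    have hc : (⟪ψ, ω⟫_ℂ : ℂ) ≠ 0 := by
      intro h
      rw [h] at hr
      simp at hr
    exact ⟨_, key ω hω hc⟩
  -- 1/F is a lower bound of ξset
  have hlb : ∀ r ∈ ξset, 1 / F ≤ r := by
    intro r hr
    rw [hξ] at hr
    obtain ⟨k, a, s, hsS, hdec, rfl⟩ := hr
    set T : ℝ := ∑ j, ‖a j‖ with hT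
    have hT0 : 0 ≤ T := Finset.sum_nonneg fun j _ => norm_nonneg _
    have hone : (1 : ℝ) ≤ T * Real.sqrt F := by
      have hinner : (⟪ψ, ψ⟫_ℂ : ℂ) = 1 := by
        rw [inner_self_eq_norm_sq_to_K, hψ]
        norm_num
      have h1 : (1 : ℝ) = ‖(⟪ψ, ψ⟫_ℂ : ℂ)‖ := by rw [hinner]; simp
      have h2 : (⟪ψ, ψ⟫_ℂ : ℂ) = ∑ j, a j * ⟪ψ, s j⟫_ℂ := by
        have : (⟪ψ, ψ⟫_ℂ : ℂ) = ⟪ψ, ∑ j, a j • s j⟫_ℂ := by rw [← hdec]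
        rw [this, inner_sum]
        simp [inner_smul_right]
      calc (1 : ℝ) = ‖(⟪ψ, ψ⟫_ℂ : ℂ)‖ := h1
        _ = ‖∑ j, a j * ⟪ψ, s j⟫_ℂ‖ := by rw [h2]
        _ ≤ ∑ j, ‖a j * ⟪ψ, s j⟫_ℂ‖ := norm_sum_le _ _
        _ = ∑ j, ‖a j‖ * ‖(⟪ψ, s j⟫_ℂ : ℂ)‖ := by simp [norm_mul]
        _ ≤ ∑ j, ‖a j‖ * Real.sqrt F := by
            refine Finset.sum_le_sum fun j _ => ?_
            refine mul_le_mul_of_nonneg_left ?_ (norm_nonneg _)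
            have := hFub (s j) (hsS j)
            have h3 : ‖(⟪ψ, s j⟫_ℂ : ℂ)‖ = Real.sqrt (‖(⟪ψ, s j⟫_ℂ : ℂ)‖ ^ 2) := by
              rw [Real.sqrt_sq (norm_nonneg _)]
            rw [h3]
            exact Real.sqrt_le_sqrt this
        _ = T * Real.sqrt F := by rw [← Finset.sum_mul]
    have hTF : 1 ≤ T ^ 2 * F := by
      have := mul_le_mul hone hone (by norm_num) (by positivity)
      rw [one_mul] at this
      calc (1 : ℝ) ≤ (T * Real.sqrt F) * (T * Real.sqrt F) := this
        _ = T ^ 2 * F := by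
            rw [mul_mul_mul_comm, ← sq, ← sq, Real.sq_sqrt hFpos.le]
    rw [div_le_iff₀ hFpos]
    exact hTF
  have hbdd : BddBelow ξset := ⟨1 / F, hlb⟩
  have hge : 1 / F ≤ sInf ξset := le_csInf hξne hlb
  -- upper bound
  have hm0 : 0 < sInf ξset := lt_of_lt_of_le (one_div_pos.mpr hFpos) hge
  have hFle : F ≤ 1 / sInf ξset := by
    rw [hF]
    refine csSup_le hFne ?_
    rintro r ⟨s, hs, rfl⟩
    by_cases hc : (⟪ψ, s⟫_ℂ : ℂ) = 0
    · rw [hc, norm_zero]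
      have h0 : (0 : ℝ) ^ 2 = 0 := by norm_num
      rw [h0]
      exact div_nonneg zero_le_one hm0.le
    · have hmem := key s hs hc
      have hle := csInf_le hbdd hmem
      have hr0 : 0 < ‖(⟪ψ, s⟫_ℂ : ℂ)‖ ^ 2 := pow_pos (norm_pos_iff.mpr hc) 2
      rw [le_div_iff₀ hr0] at hle
      rw [le_div_iff₀ hm0]
      nlinarith [hle]
  have hle : sInf ξset ≤ 1 / F := by
    rw [le_div_iff₀ hFpos]
    calc sInf ξset * F ≤ sInf ξset * (1 / sInf ξset) := by
          exact mul_le_mul_of_nonneg_left hFle hm0.le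
      _ = 1 := by field_simp
  linarith
end

section
/- For all real θ and λⱼ, and an orthonormal family, the 4-qubit vectors |A(θ)⟩ = (1/2)(e^{-iθ/4}|0000⟩ + e^{iθ/4}|0011⟩ + e^{iθ/4}|1100⟩ + e^{i3θ/4}|1111⟩) and |B(θ)⟩ = (1/2)(e^{-iθ/4}|0000⟩ - e^{iθ/4}|0011⟩ - e^{iθ/4}|1100⟩ + e^{i3θ/4}|1111⟩) are orthonormal unit vectors, and cos(θ/4)|A(θ)⟩ + i sin(θ/4)|B(θ)⟩ = (1/2)(|0000⟩ + |1100⟩ + |0011⟩ + e^{iθ}|1111⟩). -/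
open scoped InnerProductSpace

lemma aux_norm {E : Type*} [NormedAddCommGroup E] [InnerProductSpace ℂ E]
    (x : E) (h : ⟪x, x⟫_ℂ = 1) : ‖x‖ = 1 := by
  have h2 : ‖x‖ ^ 2 = 1 := by
    have h3 := inner_self_eq_norm_sq_to_K (𝕜 := ℂ) x
    rw [h] at h3
    rw [← Complex.ofReal_inj]; push_cast; exact h3.symm
  nlinarith [norm_nonneg x]

lemma aux_cis (x : ℝ) :
    Complex.exp (Complex.I * x) = (Real.cos x : ℂ) + Complex.I * Real.sin x := by
  rw [show (Complex.I * x : ℂ) = (x : ℂ) * Complex.I by ring, Complex.exp_mul_I,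
    ← Complex.ofReal_cos, ← Complex.ofReal_sin]; ring

/-- the states |A(θ)⟩ and |B(θ)⟩ are orthonormal and
    cos(θ/4)|A(θ)⟩ + i sin(θ/4)|B(θ)⟩ = |M_θ⟩, the matchgate magic state.
    The 4-qubit computational basis of ℂ¹⁶ is indexed so that
    |0000⟩ = e 0, |0011⟩ = e 3, |1100⟩ = e 12, |1111⟩ = e 15. -/
theorem stmt17 (θ : ℝ)
    (e : Fin 16 → EuclideanSpace ℂ (Fin 16))
    (he : ∀ i, e i = EuclideanSpace.single i 1)
    (A B : EuclideanSpace ℂ (Fin 16))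
    (hA : A = (1 / 2 : ℂ) •
      (Complex.exp (-Complex.I * θ / 4) • e 0 + Complex.exp (Complex.I * θ / 4) • e 3 +
       Complex.exp (Complex.I * θ / 4) • e 12 + Complex.exp (Complex.I * (3 * θ) / 4) • e 15))
    (hB : B = (1 / 2 : ℂ) •
      (Complex.exp (-Complex.I * θ / 4) • e 0 - Complex.exp (Complex.I * θ / 4) • e 3 -
       Complex.exp (Complex.I * θ / 4) • e 12 + Complex.exp (Complex.I * (3 * θ) / 4) • e 15)) :
    ‖A‖ = 1 ∧ ‖B‖ = 1 ∧ ⟪A, B⟫_ℂ = 0 ∧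
      (Real.cos (θ / 4) : ℂ) • A + (Complex.I * Real.sin (θ / 4)) • B =
        (1 / 2 : ℂ) • (e 0 + e 12 + e 3 + Complex.exp (Complex.I * θ) • e 15) := by
  subst hA hB
  simp only [he]
  refine ⟨?_, ?_, ?_, ?_⟩
  · apply aux_norm
    simp [-inner_self_eq_norm_sq_to_K, inner_add_left, inner_add_right, inner_sub_left, inner_sub_right,
      inner_smul_left, inner_smul_right, EuclideanSpace.inner_single_left,
      EuclideanSpace.single_apply, ← Complex.exp_conj, map_mul, map_div₀,
      Complex.conj_I, Complex.conj_ofReal, map_ofNat, ← Complex.exp_add]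
    ring_nf
    rw [← Complex.exp_add, ← Complex.exp_add]
    ring_nf
    norm_num
  · apply aux_norm
    simp [-inner_self_eq_norm_sq_to_K, inner_add_left, inner_add_right, inner_sub_left, inner_sub_right,
      inner_smul_left, inner_smul_right, EuclideanSpace.inner_single_left,
      EuclideanSpace.single_apply, ← Complex.exp_conj, map_mul, map_div₀,
      Complex.conj_I, Complex.conj_ofReal, map_ofNat, ← Complex.exp_add]
    ring_nf
    rw [← Complex.exp_add, ← Complex.exp_add]
    ring_nf
    norm_num
  · simp [inner_add_left, inner_add_right, inner_sub_left, inner_sub_right,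
      inner_smul_left, inner_smul_right, EuclideanSpace.inner_single_left,
      EuclideanSpace.single_apply, ← Complex.exp_conj, map_mul, map_div₀,
      Complex.conj_I, Complex.conj_ofReal, map_ofNat, ← Complex.exp_add]
    ring_nf
    all_goals first
      | done
      | (simp only [← Complex.exp_add]; ring_nf; try norm_num)
  · have K1 : (Complex.cos ((θ:ℂ)/4) + Complex.I * Complex.sin ((θ:ℂ)/4)) * Complex.exp (-Complex.I * (θ:ℂ) / 4) = 1 := by
      rw [show Complex.cos ((θ:ℂ)/4) + Complex.I * Complex.sin ((θ:ℂ)/4)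
          = Complex.exp (((θ:ℂ)/4) * Complex.I) by rw [Complex.exp_mul_I]; ring,
        ← Complex.exp_add, ← Complex.exp_zero]
      congr 1; ring
    have K2 : (Complex.cos ((θ:ℂ)/4) - Complex.I * Complex.sin ((θ:ℂ)/4)) * Complex.exp (Complex.I * (θ:ℂ) / 4) = 1 := by
      rw [show Complex.cos ((θ:ℂ)/4) - Complex.I * Complex.sin ((θ:ℂ)/4)
          = Complex.exp ((-((θ:ℂ)/4)) * Complex.I) by
            rw [Complex.exp_mul_I, Complex.cos_neg, Complex.sin_neg]; ring,
        ← Complex.exp_add, ← Complex.exp_zero]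
      congr 1; ring
    have K3 : (Complex.cos ((θ:ℂ)/4) + Complex.I * Complex.sin ((θ:ℂ)/4)) * Complex.exp (Complex.I * (3 * (θ:ℂ)) / 4) = Complex.exp (Complex.I * (θ:ℂ)) := by
      rw [show Complex.cos ((θ:ℂ)/4) + Complex.I * Complex.sin ((θ:ℂ)/4)
          = Complex.exp (((θ:ℂ)/4) * Complex.I) by rw [Complex.exp_mul_I]; ring,
        ← Complex.exp_add]
      congr 1; ring
    match_scalars
    · linear_combination K1/2
    · linear_combination K2/2
    · linear_combination K2/2
    · linear_combination K3/2
end
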